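/- Let G be an infinitely edge-connected graph and S a set of oriented unitary compound-separations of G whose separators are pairwise distinct, such that the relation ≤ on oriented separations linearly orders S and (S, ≤) is order-isomorphic to (ℚ, ≤). Then the halved Farey graph is strongly immersed in G. -/

import Mathlib

open SimpleGraph

/-- Two walks (with arbitrary endpoints) are edge-disjoint. -/
def EdgeDisjW {V : Type*} {G : SimpleGraph V} {a b c d : V}
    (p : G.Walk a b) (q : G.Walk c d) : Prop :=
  ∀ e, e ∈ p.edges → e ∉ q.edges

/-- A graph is infinitely edge-connected: it has at least two vertices and
between any two distinct vertices there are infinitely many pairwise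
edge-disjoint paths. -/
def InfEdgeConn {V : Type*} (G : SimpleGraph V) : Prop :=
  (∃ u v : V, u ≠ v) ∧
    ∀ u v : V, u ≠ v →
      ∃ P : ℕ → G.Walk u v,
        (∀ n, (P n).IsPath) ∧ ∀ m n, m ≠ n → EdgeDisjW (P m) (P n)

/-- Infinite edge-connectivity of the subgraph spanned by a vertex set `S`
(used for graphs of the form "union of a family of paths", whose abstract
vertex set is `S`). -/
def InfEdgeConnOn {V : Type*} (G : SimpleGraph V) (S : Set V) : Prop :=
  (∃ u ∈ S, ∃ v ∈ S, u ≠ v) ∧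
    ∀ u ∈ S, ∀ v ∈ S, u ≠ v →
      ∃ P : ℕ → G.Walk u v,
        (∀ n, (P n).IsPath) ∧ ∀ m n, m ≠ n → EdgeDisjW (P m) (P n)

/-- `α` together with the family of paths `P` (one for each edge of `H`)
is a strong immersion of `H` in `G`. -/
def IsStrongImmersion {VH VG : Type*} (H : SimpleGraph VH) (G : SimpleGraph VG)
    (α : VH → VG) (P : ∀ ⦃u v : VH⦄, H.Adj u v → G.Walk (α u) (α v)) : Prop :=
  Function.Injective α ∧
  (∀ ⦃u v : VH⦄ (h : H.Adj u v), (P h).IsPath) ∧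
  (∀ ⦃u v u' v' : VH⦄ (h : H.Adj u v) (h' : H.Adj u' v'),
      s(u, v) ≠ s(u', v') → EdgeDisjW (P h) (P h')) ∧
  (∀ ⦃u v : VH⦄ (h : H.Adj u v), ∀ w ∈ (P h).support,
      (∃ z, α z = w) → w = α u ∨ w = α v)

/-- `H` is strongly immersed in `G`. -/
def StronglyImmersed {VH VG : Type*} (H : SimpleGraph VH) (G : SimpleGraph VG) : Prop :=
  ∃ α P, IsStrongImmersion H G α P

/-- `β` together with the family of paths `P` witnesses that `G` contains
a subdivision of `H`: the paths are internally disjoint and have no internal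
vertex among the branch vertices. -/
def IsSubdivision {VH VG : Type*} (H : SimpleGraph VH) (G : SimpleGraph VG)
    (β : VH → VG) (P : ∀ ⦃u v : VH⦄, H.Adj u v → G.Walk (β u) (β v)) : Prop :=
  Function.Injective β ∧
  (∀ ⦃u v : VH⦄ (h : H.Adj u v), (P h).IsPath) ∧
  (∀ ⦃u v u' v' : VH⦄ (h : H.Adj u v) (h' : H.Adj u' v'),
      s(u, v) ≠ s(u', v') → ∀ w, w ∈ (P h).support → w ∈ (P h').support →
        (w = β u ∨ w = β v) ∧ (w = β u' ∨ w = β v')) ∧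
  (∀ ⦃u v : VH⦄ (h : H.Adj u v), ∀ w ∈ (P h).support,
      (∃ z, β z = w) → w = β u ∨ w = β v)

/-- `H` is a topological minor of `G`. -/
def TopMinor {VH VG : Type*} (H : SimpleGraph VH) (G : SimpleGraph VG) : Prop :=
  ∃ β P, IsSubdivision H G β P

/-- The dyadic rationals of the unit interval: the vertices of the halved
Farey graph. -/
def DyadicSet : Set ℚ := {q | ∃ n k : ℕ, k ≤ 2 ^ n ∧ q = (k : ℚ) / 2 ^ n}

/-- The halved Farey graph: two dyadic rationals of `[0,1]` are adjacent iff
they are of the form `k/2^n` and `(k+1)/2^n`. -/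
def halvedFarey : SimpleGraph DyadicSet where
  Adj a b := a ≠ b ∧ ∃ n k : ℕ, k + 1 ≤ 2 ^ n ∧
    ((a.1 = (k : ℚ) / 2 ^ n ∧ b.1 = ((k : ℚ) + 1) / 2 ^ n) ∨
     (b.1 = (k : ℚ) / 2 ^ n ∧ a.1 = ((k : ℚ) + 1) / 2 ^ n))
  symm := by
    constructor
    rintro a b ⟨hne, n, k, hk, h⟩
    exact ⟨hne.symm, n, k, hk, h.symm⟩
  loopless := by constructor; rintro a ⟨hne, -⟩; exact hne rfl

/-- Adjacency in the Farey graph on `ℚ ∪ {∞}` (`none` is `∞ = ±1/0`). -/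
def fareyAdj : Option ℚ → Option ℚ → Prop
  | some q, some r =>
      q.num * (r.den : ℤ) - r.num * (q.den : ℤ) = 1 ∨
      q.num * (r.den : ℤ) - r.num * (q.den : ℤ) = -1
  | some q, none => q.den = 1
  | none, some r => r.den = 1
  | none, none => False

/-- The Farey graph. -/
def fareyGraph : SimpleGraph (Option ℚ) where
  Adj := fareyAdj
  symm := by
    constructor
    rintro (_ | q) (_ | r) h <;> simp only [fareyAdj] at * <;> omega
  loopless := by
    constructor
    rintro (_ | q) h <;> simp only [fareyAdj] at h <;> omega
/-- `u` occurs strictly before `v` on the list `l`. -/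
def Before {V : Type*} (l : List V) (u v : V) : Prop := List.Sublist [u, v] l

/-- `l` is the (consecutive) portion of the list `R` starting at `u` and
ending at `v`. -/
def IsPortion {V : Type*} (R : List V) (u v : V) (l : List V) : Prop :=
  (∃ pre post, R = pre ++ l ++ post) ∧ l.head? = some u ∧ l.getLast? = some v

/-- The union of a family of walks, as a graph on the ambient vertex set
(its abstract vertex set is `walkSupp P`). -/
def walkUnion {V : Type*} {G : SimpleGraph V} {x y : V}
    (P : ℕ → G.Walk x y) : SimpleGraph V where
  Adj u v := ∃ n, s(u, v) ∈ (P n).edges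
  symm := by
    constructor
    rintro u v ⟨n, h⟩
    exact ⟨n, by rwa [Sym2.eq_swap]⟩
  loopless := by
    constructor
    rintro v ⟨n, h⟩
    exact G.irrefl ((P n).edges_subset_edgeSet h)

/-- The vertices appearing on some walk of the family. -/
def walkSupp {V : Type*} {G : SimpleGraph V} {x y : V}
    (P : ℕ → G.Walk x y) : Set V := {v | ∃ n, v ∈ (P n).support}

/-- An `x`–`y` grain line in `G`. -/
structure GrainLine {V : Type*} (G : SimpleGraph V) (x y : V) where
  ne_xy : x ≠ y
  /-- The limit set `L`. -/
  L : Set V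
  /-- The linear order `≤_L` on `L`. -/
  le : V → V → Prop
  /-- The pairwise edge-disjoint `x`–`y` paths. -/
  P : ℕ → G.Walk x y
  isPath : ∀ n, (P n).IsPath
  edgeDisj : ∀ m n, m ≠ n → EdgeDisjW (P m) (P n)
  le_refl : ∀ v ∈ L, le v v
  le_trans : ∀ u ∈ L, ∀ v ∈ L, ∀ w ∈ L, le u v → le v w → le u w
  le_antisymm : ∀ u ∈ L, ∀ v ∈ L, le u v → le v u → u = v
  le_total : ∀ u ∈ L, ∀ v ∈ L, le u v ∨ le v u
  x_mem : x ∈ L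
  y_mem : y ∈ L
  x_min : ∀ v ∈ L, le x v
  y_max : ∀ v ∈ L, le v y
  /-- (GL1): `L` is the set of vertices lying on a final segment of the paths. -/
  gl1 : ∀ v : V, v ∈ L ↔ ∃ N : ℕ, ∀ n : ℕ, v ∈ (P n).support ↔ N ≤ n
  /-- (GL2): a vertex of some path not in `L` lies on no other path. -/
  gl2 : ∀ n : ℕ, ∀ v ∈ (P n).support, v ∉ L → ∀ m : ℕ, m ≠ n → v ∉ (P m).support
  /-- (GL3): for `n ≥ 1`, the path `P n` traverses the vertices of `L_{<n}`
  in the order given by `≤_L`. -/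
  gl3 : ∀ n : ℕ, 1 ≤ n → ∀ u v : V, u ∈ L → v ∈ L →
      (∃ m < n, u ∈ (P m).support) → (∃ m < n, v ∈ (P m).support) →
      u ≠ v → (le u v ↔ Before (P n).support u v)

namespace GrainLine

variable {V : Type*} {G : SimpleGraph V} {x y : V}

/-- The graph `⋃𝒫` defined by the grain line. -/
def union (gl : GrainLine G x y) : SimpleGraph V := walkUnion gl.P

/-- The vertex set of `⋃𝒫`. -/
def supp (gl : GrainLine G x y) : Set V := walkSupp gl.P

/-- The set `L_{<n}` of vertices of `L` of depth `< n`. -/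
def Llt (gl : GrainLine G x y) (n : ℕ) : Set V :=
  {v | v ∈ gl.L ∧ ∃ m < n, v ∈ (gl.P m).support}

/-- The `𝒫`-depth of a vertex. -/
noncomputable def vDepth (gl : GrainLine G x y) (v : V) : ℕ :=
  sInf {n | v ∈ (gl.P n).support}

/-- The `𝒫`-depth of an edge. -/
noncomputable def eDepth (gl : GrainLine G x y) (e : Sym2 V) : ℕ :=
  sInf {n | e ∈ (gl.P n).edges}

/-- `u` and `v` are the ends of a `𝒫`-segment of depth `d`: both lie in
`L_{<d}` and `v` is the successor of `u` in `(L_{<d}, ≤_L)`. -/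
def IsSegEnds (gl : GrainLine G x y) (d : ℕ) (u v : V) : Prop :=
  u ∈ gl.Llt d ∧ v ∈ gl.Llt d ∧ u ≠ v ∧ gl.le u v ∧
    ∀ z ∈ gl.Llt d, gl.le u z → gl.le z v → z = u ∨ z = v

/-- The grain line is well-structured: every vertex of a `𝒫`-segment
`u P_d v` lying in `L` belongs to the interval `[u,v]` of `(L, ≤_L)`. -/
def WellStructured (gl : GrainLine G x y) : Prop :=
  ∀ d u v, gl.IsSegEnds d u v →
    ∀ w ∈ gl.L, (w = u ∨ w = v ∨ List.Sublist [u, w, v] (gl.P d).support) →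
      gl.le u w ∧ gl.le w v

/-- The grain line is free: the graph `⋃𝒫` it defines is infinitely
edge-connected. -/
def Free (gl : GrainLine G x y) : Prop := InfEdgeConnOn gl.union gl.supp

/-- The grain line is wildly presented. -/
def WildlyPresented (gl : GrainLine G x y) : Prop :=
  ∀ n : ℕ, 1 ≤ n → ∀ u v : V, u ∈ gl.Llt n → v ∈ gl.Llt n → u ≠ v → gl.le u v →
    ∃ w ∈ gl.L, w ≠ u ∧ w ≠ v ∧ gl.le u w ∧ gl.le w v ∧
      List.Sublist [u, w, v] (gl.P n).support

end GrainLine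

/-- `G` is a generalised halved Farey graph: it is defined by a grain line
satisfying (GL2') and (GL3'). -/
def IsGenHalvedFarey {V : Type*} (G : SimpleGraph V) : Prop :=
  ∃ (x y : V) (gl : GrainLine G x y),
    (∀ v : V, v ∈ gl.L) ∧
    (∀ u v : V, gl.le u v ↔ (u = v ∨ ∃ n, Before (gl.P n).support u v)) ∧
    (∀ u v : V, G.Adj u v ↔ ∃ n, s(u, v) ∈ (gl.P n).edges)
/-- `{A, B}` is a compound-separation of `G`. -/
def IsCompoundSep {V : Type*} (G : SimpleGraph V) (A B : Set V) : Prop :=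
  A ∪ B = Set.univ ∧ (A \ B).Nonempty ∧ (B \ A).Nonempty ∧ (A ∩ B).Finite ∧
    {p : V × V | G.Adj p.1 p.2 ∧ p.1 ∈ A \ B ∧ p.2 ∈ B \ A}.Finite

/-- The separation `{A, B}` separates the vertices `u` and `v`. -/
def SepPair {V : Type*} (A B : Set V) (u v : V) : Prop :=
  (u ∈ A \ B ∧ v ∈ B \ A) ∨ (u ∈ B \ A ∧ v ∈ A \ B)

/-- The compound-separation `{A, B}` separates `u` and `v` minimally. -/
def MinSeps {V : Type*} (G : SimpleGraph V) (A B : Set V) (u v : V) : Prop :=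
  SepPair A B u v ∧
    ∀ C D : Set V, IsCompoundSep G C D → C ∩ D ⊂ A ∩ B → ¬ SepPair C D u v

/-- `{A, B}` is a unitary compound-separation of `G` with separator `w`. -/
def IsUnitaryCSep {V : Type*} (G : SimpleGraph V) (A B : Set V) (w : V) : Prop :=
  IsCompoundSep G A B ∧ A ∩ B = {w}

/-- `w` is a compound-cutvertex of `G`. -/
def IsCompoundCutvertex {V : Type*} (G : SimpleGraph V) (w : V) : Prop :=
  ∃ A B, IsUnitaryCSep G A B w

/-- `G` is `k`-compound-connected: no compound-separation of order `< k`
separates any two vertices. -/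
def kCompConn {V : Type*} (G : SimpleGraph V) (k : ℕ) : Prop :=
  ∀ A B : Set V, IsCompoundSep G A B → (A ∩ B).ncard < k →
    ∀ u v : V, ¬ SepPair A B u v

/-- `u` and `v` cannot be separated by deleting finitely many edges. -/
def FinEdgeConn {V : Type*} (G : SimpleGraph V) (u v : V) : Prop :=
  ∀ F : Set (Sym2 V), F.Finite → (G.deleteEdges F).Reachable u v

/-- `G` is a Π-graph: it is infinitely edge-connected but has no two vertices
linked by infinitely many pairwise internally disjoint paths. -/
def PiGraph {V : Type*} (G : SimpleGraph V) : Prop :=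
  InfEdgeConn G ∧
    ∀ u v : V, u ≠ v →
      ¬ ∃ P : ℕ → G.Walk u v, (∀ n, (P n).IsPath) ∧
          ∀ m n, m ≠ n → ∀ w ∈ (P m).support, w ∈ (P n).support → w = u ∨ w = v

/-- `H` is a `k`-bounded minor of `G`: there are disjoint nonempty connected
branch sets of size `< k`. -/
def IsBddMinor {VH VG : Type*} (H : SimpleGraph VH) (G : SimpleGraph VG) (k : ℕ) : Prop :=
  ∃ B : VH → Set VG,
    (∀ h, (B h).Nonempty) ∧
    (∀ h, (B h).Finite ∧ (B h).ncard < k) ∧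
    (∀ h h', h ≠ h' → Disjoint (B h) (B h')) ∧
    (∀ h, (G.induce (B h)).Connected) ∧
    (∀ h h', H.Adj h h' → ∃ a ∈ B h, ∃ b ∈ B h', G.Adj a b)

/-- The order on oriented separations: `(A,B) ≤ (C,D)` iff `A ⊆ C` and `D ⊆ B`. -/
def osLE {V : Type*} (s t : Set V × Set V) : Prop := s.1 ⊆ t.1 ∧ t.2 ⊆ s.2

/-- The reverse orientation of an oriented separation. -/
def swapSep {V : Type*} (s : Set V × Set V) : Set V × Set V := (s.2, s.1)

/-- Two (unordered) separations, given by representative orientations, are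
nested: they have comparable orientations. -/
def NestedSep {V : Type*} (s t : Set V × Set V) : Prop :=
  osLE s t ∨ osLE t s ∨ osLE s (swapSep t) ∨ osLE (swapSep s) t

/-- `σ` is an orientation of the set `N` of separations which is a star. -/
def IsStarOrientation {V : Type*} (N σ : Set (Set V × Set V)) : Prop :=
  (∀ s ∈ N, s ∈ σ ∨ swapSep s ∈ σ) ∧
  (∀ s ∈ N, ¬ (s ∈ σ ∧ swapSep s ∈ σ)) ∧
  (∀ t ∈ σ, t ∈ N ∨ swapSep t ∈ N) ∧
  (∀ s ∈ σ, ∀ t ∈ σ, s ≠ t → osLE s (swapSep t))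

/-- The set `N` of unitary compound-separations is faithful to the
compound-cutvertex `w` in `G`. -/
def FaithfulToVert {V : Type*} (G : SimpleGraph V) (N : Set (Set V × Set V)) (w : V) : Prop :=
  (∃ σ, IsStarOrientation {s ∈ N | s.1 ∩ s.2 = {w}} σ) ∧
  ∀ u v : V, (∃ A B, IsUnitaryCSep G A B w ∧ SepPair A B u v) →
    ∃ s ∈ N, s.1 ∩ s.2 = {w} ∧ SepPair s.1 s.2 u v

/-- The set `N` of unitary compound-separations is faithful to `G`. -/
def FaithfulSet {V : Type*} (G : SimpleGraph V) (N : Set (Set V × Set V)) : Prop :=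
  ∀ w : V, IsCompoundCutvertex G w → FaithfulToVert G N w

/-- A set of graphs is typical for the class of infinitely edge-connected
graphs with regard to the topological minor relation. -/
def TypicalTopMinor (𝓗 : Set (Σ V : Type, SimpleGraph V)) : Prop :=
  ∀ (W : Type) (G : SimpleGraph W), InfEdgeConn G → ∃ H ∈ 𝓗, TopMinor H.2 G


section Crossing
variable {V : Type*} {G : SimpleGraph V} {X Y : Set V} {w₀ : V}

lemma cross_of_walk
    (hcov : ∀ x : V, x ∈ X ∨ x ∈ Y ∨ x = w₀)
    (hXY : ∀ x, x ∈ X → x ∉ Y) :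
    ∀ {u z : V} (p : G.Walk u z), u ∈ Y → z ∈ X → w₀ ∉ p.support →
    ∃ x y, x ∈ X ∧ y ∈ Y ∧ s(x, y) ∈ p.edges := by
  intro u z p
  induction p with
  | nil =>
    intro hu hz _
    exact absurd hu (hXY _ hz)
  | @cons a b c h q ih =>
    intro hu hz hw
    rw [Walk.support_cons, List.mem_cons] at hw
    push_neg at hw
    rcases hcov b with hb | hb | hb
    · exact ⟨b, a, hb, hu, by rw [Walk.edges_cons, Sym2.eq_swap]; exact List.mem_cons_self⟩
    · obtain ⟨x, y, hx, hy, he⟩ := ih hb hz hw.2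
      exact ⟨x, y, hx, hy, by rw [Walk.edges_cons]; exact List.mem_cons_of_mem _ he⟩
    · exact absurd (hb ▸ q.start_mem_support) hw.2

lemma cross_of_path [DecidableEq V]
    (hcov : ∀ x : V, x ∈ X ∨ x ∈ Y ∨ x = w₀)
    (hXY : ∀ x, x ∈ X → x ∉ Y) (hXw : w₀ ∉ X)
    {u v z : V} (p : G.Walk u v) (hp : p.IsPath)
    (hu : u ∈ Y) (hv : v ∈ Y) (hz : z ∈ X) (hzs : z ∈ p.support) :
    ∃ x y, x ∈ X ∧ y ∈ Y ∧ s(x, y) ∈ p.edges := by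
  by_cases h1 : w₀ ∈ (p.takeUntil z hzs).support
  · -- then w₀ ∉ dropUntil support
    have h2 : w₀ ∉ (p.dropUntil z hzs).support := by
      intro h2
      have hnd : p.support.Nodup := hp.support_nodup
      rw [← p.take_spec hzs, Walk.support_append] at hnd
      have hdisj := List.disjoint_of_nodup_append hnd
      have hwz : w₀ ≠ z := fun h => hXw (h ▸ hz)
      have : w₀ ∈ (p.dropUntil z hzs).support.tail := by
        rw [Walk.support_eq_cons] at h2
        rcases List.mem_cons.mp h2 with h | h
        · exact absurd h hwz
        · exact h
      exact hdisj h1 this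
    obtain ⟨x, y, hx, hy, he⟩ := cross_of_walk hcov hXY ((p.dropUntil z hzs).reverse)
      hv hz (by rw [Walk.support_reverse, List.mem_reverse]; exact h2)
    refine ⟨x, y, hx, hy, ?_⟩
    rw [Walk.edges_reverse, List.mem_reverse] at he
    exact p.edges_dropUntil_subset hzs he
  · obtain ⟨x, y, hx, hy, he⟩ := cross_of_walk hcov hXY (p.takeUntil z hzs) hu hz h1
    exact ⟨x, y, hx, hy, p.edges_takeUntil_subset hzs he⟩

end Crossing

noncomputable section FareySetup
open Classical
variable {V : Type*}

structure FSetup (V : Type*) where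
  G : SimpleGraph V
  hG : InfEdgeConn G
  S : Set (Set V × Set V)
  hS : ∀ s ∈ S, ∃ w, IsUnitaryCSep G s.1 s.2 w
  hdist : ∀ s ∈ S, ∀ t ∈ S, s ≠ t → s.1 ∩ s.2 ≠ t.1 ∩ t.2
  f : ↥S ≃ ℚ
  hf : ∀ s t : ↥S, osLE s.val t.val ↔ f s ≤ f t

namespace FSetup
variable (X : FSetup V)

def sep (q : ℚ) : Set V × Set V := (X.f.symm q).val

lemma sep_mem (q : ℚ) : X.sep q ∈ X.S := (X.f.symm q).2

lemma sep_le {q r : ℚ} (h : q ≤ r) : osLE (X.sep q) (X.sep r) := by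
  show osLE (X.f.symm q).val (X.f.symm r).val
  rw [X.hf]
  simpa using h

lemma sep_inj {q r : ℚ} (h : X.sep q = X.sep r) : q = r := by
  have : X.f.symm q = X.f.symm r := Subtype.ext h
  simpa using congrArg X.f this

def wv (q : ℚ) : V := (X.hS _ (X.sep_mem q)).choose

lemma wv_spec (q : ℚ) : IsUnitaryCSep X.G (X.sep q).1 (X.sep q).2 (X.wv q) :=
  (X.hS _ (X.sep_mem q)).choose_spec

lemma wv_mem (q : ℚ) : X.wv q ∈ (X.sep q).1 ∩ (X.sep q).2 := by
  rw [(X.wv_spec q).2]; rfl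

lemma sep_inter_ne {q r : ℚ} (h : q ≠ r) :
    (X.sep q).1 ∩ (X.sep q).2 ≠ (X.sep r).1 ∩ (X.sep r).2 := by
  refine X.hdist _ (X.sep_mem q) _ (X.sep_mem r) ?_
  intro he
  exact h (X.sep_inj he)

/-- key side lemma: for q < r, wv q is strictly on the A-side of sep r. -/
lemma wv_lt_left {q r : ℚ} (h : q < r) :
    X.wv q ∈ (X.sep r).1 \ (X.sep r).2 := by
  have h1 : X.wv q ∈ (X.sep r).1 := (X.sep_le h.le).1 (X.wv_mem q).1
  refine ⟨h1, fun h2 => ?_⟩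
  have : X.wv q ∈ (X.sep r).1 ∩ (X.sep r).2 := ⟨h1, h2⟩
  rw [(X.wv_spec r).2] at this
  have heq : X.wv q = X.wv r := this
  apply X.sep_inter_ne h.ne
  rw [(X.wv_spec q).2, (X.wv_spec r).2, heq]

lemma wv_lt_right {q r : ℚ} (h : q < r) :
    X.wv r ∈ (X.sep q).2 \ (X.sep q).1 := by
  have h1 : X.wv r ∈ (X.sep q).2 := (X.sep_le h.le).2 (X.wv_mem r).2
  refine ⟨h1, fun h2 => ?_⟩
  have : X.wv r ∈ (X.sep q).1 ∩ (X.sep q).2 := ⟨h2, h1⟩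
  rw [(X.wv_spec q).2] at this
  have heq : X.wv r = X.wv q := this
  apply X.sep_inter_ne h.ne
  rw [(X.wv_spec q).2, (X.wv_spec r).2, heq]

lemma wv_inj {q r : ℚ} (h : X.wv q = X.wv r) : q = r := by
  by_contra hne
  rcases lt_or_gt_of_ne hne with hlt | hlt
  · exact (X.wv_lt_left hlt).2 (h ▸ (X.wv_mem r).2)
  · exact (X.wv_lt_left hlt).2 (h.symm ▸ (X.wv_mem q).2)

/-- The cross edges of the separation at `q`, as a set of `Sym2 V`. -/
def Cross (q : ℚ) : Set (Sym2 V) :=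
  (fun p : V × V => s(p.1, p.2)) ''
    {p : V × V | X.G.Adj p.1 p.2 ∧ p.1 ∈ (X.sep q).1 \ (X.sep q).2 ∧ p.2 ∈ (X.sep q).2 \ (X.sep q).1}

lemma cross_finite (q : ℚ) : (X.Cross q).Finite :=
  ((X.wv_spec q).1.2.2.2.2).image _

/-- `z` is separated from both `u` and `v` by the separation at `q`. -/
def SideSep (q : ℚ) (z u v : V) : Prop :=
  (z ∈ (X.sep q).1 \ (X.sep q).2 ∧ u ∈ (X.sep q).2 \ (X.sep q).1 ∧ v ∈ (X.sep q).2 \ (X.sep q).1) ∨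
  (z ∈ (X.sep q).2 \ (X.sep q).1 ∧ u ∈ (X.sep q).1 \ (X.sep q).2 ∧ v ∈ (X.sep q).1 \ (X.sep q).2)

lemma cover (q : ℚ) (x : V) :
    x ∈ (X.sep q).1 \ (X.sep q).2 ∨ x ∈ (X.sep q).2 \ (X.sep q).1 ∨ x = X.wv q := by
  have hU : (X.sep q).1 ∪ (X.sep q).2 = Set.univ := (X.wv_spec q).1.1
  have hx : x ∈ (X.sep q).1 ∪ (X.sep q).2 := hU ▸ Set.mem_univ x
  by_cases h1 : x ∈ (X.sep q).1 <;> by_cases h2 : x ∈ (X.sep q).2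
  · right; right
    have : x ∈ (X.sep q).1 ∩ (X.sep q).2 := ⟨h1, h2⟩
    rwa [(X.wv_spec q).2] at this
  · exact Or.inl ⟨h1, h2⟩
  · exact Or.inr (Or.inl ⟨h2, h1⟩)
  · rcases hx with h | h
    exacts [absurd h h1, absurd h h2]

/-- If a path joins `u, v` which are separated (on the same side) from `z`
by the separation at `q`, and visits `z`, then it uses a cross edge of `q`. -/
lemma cross_of_visit [DecidableEq V] {q : ℚ} {u v z : V} (hside : X.SideSep q z u v)
    {p : X.G.Walk u v} (hp : p.IsPath) (hzs : z ∈ p.support) :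
    ∃ e ∈ p.edges, e ∈ X.Cross q := by
  have hwA : X.wv q ∉ (X.sep q).1 \ (X.sep q).2 := fun h => h.2 (X.wv_mem q).2
  have hwB : X.wv q ∉ (X.sep q).2 \ (X.sep q).1 := fun h => h.2 (X.wv_mem q).1
  rcases hside with ⟨hz, hu, hv⟩ | ⟨hz, hu, hv⟩
  · obtain ⟨x, y, hx, hy, he⟩ := cross_of_path (w₀ := X.wv q) (X.cover q)
      (fun a ha hb => hb.2 ha.1) hwA p hp hu hv hz hzs
    exact ⟨s(x, y), he, ⟨(x, y), ⟨p.edges_subset_edgeSet he, hx, hy⟩, rfl⟩⟩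
  · obtain ⟨x, y, hx, hy, he⟩ := cross_of_path (w₀ := X.wv q)
      (fun a => by rcases X.cover q a with h | h | h; exacts [Or.inr (Or.inl h), Or.inl h, Or.inr (Or.inr h)])
      (fun a ha hb => ha.2 hb.1) hwB p hp hu hv hz hzs
    refine ⟨s(x, y), he, ⟨(y, x), ⟨?_, hy, hx⟩, Sym2.eq_swap⟩⟩
    exact (p.edges_subset_edgeSet he).symm

lemma finite_bad {u v : V} (P : ℕ → X.G.Walk u v)
    (hD : ∀ m n, m ≠ n → EdgeDisjW (P m) (P n))
    (C : Set (Sym2 V)) (hC : C.Finite) :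
    {n : ℕ | ∃ e ∈ (P n).edges, e ∈ C}.Finite := by
  set s := {n : ℕ | ∃ e ∈ (P n).edges, e ∈ C} with hs
  have hch : ∀ n, n ∈ s → ∃ e, e ∈ (P n).edges ∧ e ∈ C := fun n h => by
    obtain ⟨e, he, hec⟩ := h; exact ⟨e, he, hec⟩
  classical
  set g : ℕ → Sym2 V := fun n => if h : n ∈ s then (hch n h).choose else s(u, u) with hg
  have hmem : ∀ n ∈ s, g n ∈ (P n).edges ∧ g n ∈ C := by
    intro n hn
    simp only [hg, dif_pos hn]
    exact (hch n hn).choose_spec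
  refine Set.Finite.of_finite_image (f := g) (hC.subset ?_) ?_
  · rintro e ⟨n, hn, rfl⟩
    exact (hmem n hn).2
  · intro n hn m hm he
    by_contra hne
    exact hD n m hne (g n) (hmem n hn).1 (he ▸ (hmem m hm).1)

lemma exists_good_path [DecidableEq V] {u v : V} (huv : u ≠ v)
    (E₀ : Set (Sym2 V)) (hE₀ : E₀.Finite)
    (W : Set V) (hW : W.Finite)
    (hside : ∀ z ∈ W, ∃ q, X.SideSep q z u v) :
    ∃ p : X.G.Walk u v, p.IsPath ∧ (∀ e ∈ p.edges, e ∉ E₀) ∧ ∀ z ∈ W, z ∉ p.support := by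
  obtain ⟨P, hP, hD⟩ := X.hG.2 u v huv
  set Bad : Set ℕ :=
    {n | ∃ e ∈ (P n).edges, e ∈ E₀} ∪ ⋃ z ∈ W, {n | z ∈ (P n).support} with hBad
  have hfin : Bad.Finite := by
    refine (X.finite_bad P hD E₀ hE₀).union (Set.Finite.biUnion hW ?_)
    intro z hz
    obtain ⟨q, hq⟩ := hside z hz
    refine ((X.finite_bad P hD _ (X.cross_finite q)).subset ?_)
    intro n hn
    exact X.cross_of_visit hq (hP n) hn
  obtain ⟨n, hn⟩ := hfin.infinite_compl.nonempty
  simp only [hBad, Set.mem_compl_iff, Set.mem_union, Set.mem_iUnion, Set.mem_setOf_eq,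
    not_or, not_exists] at hn
  exact ⟨P n, hP n, fun e he hE => hn.1 e ⟨he, hE⟩, fun z hz hs => hn.2 z hz hs⟩

lemma seq_paths [DecidableEq V] (N : ℕ) (a b : ℕ → V) (hab : ∀ k < N, a k ≠ b k)
    (E₀ : Set (Sym2 V)) (hE₀ : E₀.Finite)
    (W : ℕ → Set V) (hW : ∀ k < N, (W k).Finite)
    (hside : ∀ k < N, ∀ z ∈ W k, ∃ q, X.SideSep q z (a k) (b k)) :
    ∃ F : (k : ℕ) → k < N → X.G.Walk (a k) (b k),
      (∀ k (h : k < N), (F k h).IsPath) ∧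
      (∀ k (h : k < N), ∀ e ∈ (F k h).edges, e ∉ E₀) ∧
      (∀ k (h : k < N), ∀ z ∈ W k, z ∉ (F k h).support) ∧
      (∀ k (h : k < N), ∀ k' (h' : k' < N), k ≠ k' →
        ∀ e ∈ (F k h).edges, e ∉ (F k' h').edges) := by
  induction N with
  | zero => exact ⟨fun k h => absurd h (Nat.not_lt_zero k), by omega, by omega, by omega, by omega⟩
  | succ N ih =>
    obtain ⟨F, h1, h2, h3, h4⟩ := ih (fun k h => hab k (h.trans (Nat.lt_succ_self N)))
      (fun k h => hW k (h.trans (Nat.lt_succ_self N)))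
      (fun k h => hside k (h.trans (Nat.lt_succ_self N)))
    have hEfin : (E₀ ∪ ⋃ k ∈ Set.Iio N, {e | ∃ h : k < N, e ∈ (F k h).edges}).Finite := by
      refine hE₀.union (Set.Finite.biUnion (Set.finite_Iio N) ?_)
      intro k hk
      refine Set.Finite.subset (List.finite_toSet (F k hk).edges) ?_
      rintro e ⟨h, he⟩
      exact he
    obtain ⟨p, hp1, hp2, hp3⟩ := X.exists_good_path (hab N (Nat.lt_succ_self N)) _ hEfin
      (W N) (hW N (Nat.lt_succ_self N)) (hside N (Nat.lt_succ_self N))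
    set F' : (k : ℕ) → k < N + 1 → X.G.Walk (a k) (b k) := fun k h =>
      if hk : k < N then F k hk else (by
        have : k = N := by omega
        exact this ▸ p) with hF'
    have hFlt : ∀ k (hk : k < N), ∀ (h : k < N + 1), F' k h = F k hk := by
      intro k hk h
      simp only [hF', dif_pos hk]
    have hFN : ∀ (h : N < N + 1), F' N h = p := by
      intro h
      simp only [hF', dif_neg (lt_irrefl N)]
    refine ⟨F', ?_, ?_, ?_, ?_⟩
    · intro k h
      rcases Nat.lt_succ_iff_lt_or_eq.mp h with hk | hk
      · rw [hFlt k hk h]; exact h1 k hk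
      · subst hk; rw [hFN h]; exact hp1
    · intro k h
      rcases Nat.lt_succ_iff_lt_or_eq.mp h with hk | hk
      · rw [hFlt k hk h]; exact h2 k hk
      · subst hk; rw [hFN h]
        intro e he hE
        exact hp2 e he (Or.inl hE)
    · intro k h
      rcases Nat.lt_succ_iff_lt_or_eq.mp h with hk | hk
      · rw [hFlt k hk h]; exact h3 k hk
      · subst hk; rw [hFN h]; exact hp3
    · intro k h k' h' hne
      rcases Nat.lt_succ_iff_lt_or_eq.mp h with hk | hk <;>
        rcases Nat.lt_succ_iff_lt_or_eq.mp h' with hk' | hk'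
      · rw [hFlt k hk h, hFlt k' hk' h']; exact h4 k hk k' hk' hne
      · subst hk'; rw [hFlt k hk h, hFN h']
        intro e he hE
        exact hp2 e hE (Or.inr (by
          simp only [Set.mem_iUnion]
          exact ⟨k, hk, hk, he⟩)) |>.elim
      · subst hk; rw [hFN h, hFlt k' hk' h']
        intro e he hE
        exact hp2 e he (Or.inr (by
          simp only [Set.mem_iUnion]
          exact ⟨k', hk', hk', hE⟩))
      · omega

end FSetup
end FareySetup

section Dyadic

def dy (n k : ℕ) : ℚ := (k : ℚ) / 2 ^ n

def Dlev (n : ℕ) : Set ℚ := {q | ∃ k ≤ 2 ^ n, q = dy n k}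

lemma dy_lt_dy {n k k' : ℕ} : dy n k < dy n k' ↔ k < k' := by
  unfold dy
  rw [div_lt_div_iff_of_pos_right (by positivity)]
  exact_mod_cast Nat.cast_lt

lemma dy_inj {n k k' : ℕ} (h : dy n k = dy n k') : k = k' := by
  by_contra hne
  rcases lt_or_gt_of_ne hne with hlt | hlt
  · have : dy n k < dy n k' := dy_lt_dy.mpr hlt
    rw [h] at this; exact lt_irrefl _ this
  · have : dy n k' < dy n k := dy_lt_dy.mpr hlt
    rw [h] at this; exact lt_irrefl _ this

lemma dy_succ (n k : ℕ) : dy n k = dy (n + 1) (2 * k) := by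
  unfold dy
  push_cast
  rw [pow_succ]
  field_simp

lemma Dlev_succ_mono {n : ℕ} : Dlev n ⊆ Dlev (n + 1) := by
  rintro q ⟨k, hk, rfl⟩
  exact ⟨2 * k, by rw [pow_succ]; omega, dy_succ n k⟩

lemma Dlev_mono {n N : ℕ} (h : n ≤ N) : Dlev n ⊆ Dlev N := by
  induction N with
  | zero => have : n = 0 := by omega
            subst this; exact fun q hq => hq
  | succ N ih =>
    rcases Nat.lt_succ_iff_lt_or_eq.mp (Nat.lt_succ_of_le h) with h' | h'
    · exact (ih (by omega)).trans Dlev_succ_mono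
    · subst h'; exact fun q hq => hq

lemma Dlev_finite (n : ℕ) : (Dlev n).Finite := by
  refine Set.Finite.subset (Set.finite_range (fun k : Fin (2 ^ n + 1) => dy n k)) ?_
  rintro q ⟨k, hk, rfl⟩
  exact ⟨⟨k, by omega⟩, rfl⟩

lemma new_dyadic {n : ℕ} {m : ℚ} (h1 : m ∈ Dlev (n + 1)) (h2 : m ∉ Dlev n) :
    ∃ j < 2 ^ n, m = dy (n + 1) (2 * j + 1) := by
  obtain ⟨k, hk, rfl⟩ := h1
  rcases Nat.even_or_odd k with ⟨j, hj⟩ | ⟨j, hj⟩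
  · exfalso
    apply h2
    refine ⟨j, by omega, ?_⟩
    rw [dy_succ n j]
    congr 1
    omega
  · exact ⟨j, by rw [pow_succ] at hk; omega, by rw [hj]⟩

lemma dyadic_outside {N k : ℕ} {m : ℚ} (hm : m ∈ Dlev N)
    (h1 : m ≠ dy N k) (h2 : m ≠ dy N (k + 1)) :
    m < dy N k ∨ dy N (k + 1) < m := by
  obtain ⟨j, hj, rfl⟩ := hm
  have hjk : j ≠ k := fun h => h1 (by rw [h])
  have hjk1 : j ≠ k + 1 := fun h => h2 (by rw [h])
  rcases Nat.lt_or_ge j k with h | h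
  · exact Or.inl (dy_lt_dy.mpr h)
  · exact Or.inr (dy_lt_dy.mpr (by omega))

lemma dy_mem_DyadicSet {n k : ℕ} (hk : k ≤ 2 ^ n) : dy n k ∈ DyadicSet :=
  ⟨n, k, hk, rfl⟩

lemma mem_DyadicSet_iff {q : ℚ} : q ∈ DyadicSet ↔ ∃ n, q ∈ Dlev n := by
  constructor
  · rintro ⟨n, k, hk, rfl⟩
    exact ⟨n, k, hk, rfl⟩
  · rintro ⟨n, k, hk, rfl⟩
    exact ⟨n, k, hk, rfl⟩

end Dyadic

noncomputable section Construction
open Classical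
variable {V : Type*}

structure Cfg (X : FSetup V) where
  g : ℚ → ℚ
  E : ℕ → ℕ → Σ' (u v : V), X.G.Walk u v

structure CInv (X : FSetup V) (n : ℕ) (c : Cfg X) : Prop where
  mono : ∀ a ∈ Dlev n, ∀ b ∈ Dlev n, a < b → c.g a < c.g b
  ends1 : ∀ l ≤ n, ∀ k, k + 1 ≤ 2 ^ l → (c.E l k).1 = X.wv (c.g (dy l k))
  ends2 : ∀ l ≤ n, ∀ k, k + 1 ≤ 2 ^ l → (c.E l k).2.1 = X.wv (c.g (dy l (k + 1)))
  path : ∀ l ≤ n, ∀ k, k + 1 ≤ 2 ^ l → (c.E l k).2.2.IsPath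
  disj : ∀ l ≤ n, ∀ k, k + 1 ≤ 2 ^ l → ∀ l' ≤ n, ∀ k', k' + 1 ≤ 2 ^ l' →
    (l ≠ l' ∨ k ≠ k') → ∀ e ∈ (c.E l k).2.2.edges, e ∉ (c.E l' k').2.2.edges
  avoid : ∀ l ≤ n, ∀ k, k + 1 ≤ 2 ^ l → ∀ m ∈ Dlev n, m ≠ dy l k → m ≠ dy l (k + 1) →
    X.wv (c.g m) ∉ (c.E l k).2.2.support

def CExt (X : FSetup V) (n : ℕ) (c c' : Cfg X) : Prop :=
  (∀ m ∈ Dlev n, c'.g m = c.g m) ∧ (∀ l ≤ n, ∀ k, c'.E l k = c.E l k)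

namespace FSetup
variable (X : FSetup V)

lemma wv_ne {q r : ℚ} (h : q ≠ r) : X.wv q ≠ X.wv r := fun he => h (X.wv_inj he)

lemma base [DecidableEq V] : ∃ c : Cfg X, CInv X 0 c := by
  have h01 : (0 : ℚ) ≠ 1 := by norm_num
  obtain ⟨p, hp, -, -⟩ := X.exists_good_path (X.wv_ne h01) ∅ Set.finite_empty ∅
    Set.finite_empty (by simp)
  have hd0 : dy 0 0 = (0 : ℚ) := by norm_num [dy]
  have hd1 : dy 0 1 = (1 : ℚ) := by norm_num [dy]
  have v₀ : V := X.hG.1.choose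
  set q : X.G.Walk (X.wv (dy 0 0)) (X.wv (dy 0 1)) :=
    p.copy (congrArg X.wv hd0.symm) (congrArg X.wv hd1.symm) with hq
  refine ⟨⟨id, fun l k => if l = 0 ∧ k = 0 then ⟨X.wv (dy 0 0), X.wv (dy 0 1), q⟩
    else ⟨v₀, v₀, SimpleGraph.Walk.nil⟩⟩, ?_, ?_, ?_, ?_, ?_, ?_⟩
  · intro a _ b _ hab
    exact hab
  · intro l hl k hk
    have hl0 : l = 0 := by omega
    subst hl0
    have hk0 : k = 0 := by simpa using hk
    subst hk0
    simp only [if_pos (And.intro rfl rfl)]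
    rfl
  · intro l hl k hk
    have hl0 : l = 0 := by omega
    subst hl0
    have hk0 : k = 0 := by simpa using hk
    subst hk0
    simp only [if_pos (And.intro rfl rfl)]
    rfl
  · intro l hl k hk
    have hl0 : l = 0 := by omega
    subst hl0
    have hk0 : k = 0 := by simpa using hk
    subst hk0
    simp only [if_pos (And.intro rfl rfl)]
    exact (SimpleGraph.Walk.isPath_copy _ _ _).mpr hp
  · intro l hl k hk l' hl' k' hk' hne
    exfalso
    have hl0 : l = 0 := by omega
    have hl0' : l' = 0 := by omega
    subst hl0; subst hl0'
    have hk0 : k = 0 := by simpa using hk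
    have hk0' : k' = 0 := by simpa using hk'
    subst hk0; subst hk0'
    rcases hne with h | h <;> exact h rfl
  · intro l hl k hk m hm hne1 hne2
    exfalso
    obtain ⟨j, hj, rfl⟩ := hm
    have hl0 : l = 0 := by omega
    have hk0 : k = 0 := by subst hl0; omega
    subst hl0; subst hk0
    interval_cases j
    · exact hne1 rfl
    · exact hne2 rfl

lemma step [DecidableEq V] (n : ℕ) (c : Cfg X) (hc : CInv X n c) :
    ∃ c' : Cfg X, CInv X (n + 1) c' ∧ CExt X n c c' := by
  classical
  set T : Set V :=
    ⋃ l ∈ Set.Iic n, ⋃ k ∈ Set.Iio (2 ^ l), {v : V | v ∈ (c.E l k).2.2.support} with hTdef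
  have hT : T.Finite := by
    refine Set.Finite.biUnion (Set.finite_Iic n) fun l _ => ?_
    refine Set.Finite.biUnion (Set.finite_Iio (2 ^ l)) fun k _ => ?_
    exact (c.E l k).2.2.support.finite_toSet
  have hTmem : ∀ l ≤ n, ∀ k, k + 1 ≤ 2 ^ l → ∀ v ∈ (c.E l k).2.2.support, v ∈ T := by
    intro l hl k hk v hv
    simp only [hTdef, Set.mem_iUnion, Set.mem_Iic, Set.mem_Iio, Set.mem_setOf_eq]
    exact ⟨l, hl, k, by omega, hv⟩
  set E₀ : Set (Sym2 V) :=
    ⋃ l ∈ Set.Iic n, ⋃ k ∈ Set.Iio (2 ^ l), {e : Sym2 V | e ∈ (c.E l k).2.2.edges} with hE₀def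
  have hE₀ : E₀.Finite := by
    refine Set.Finite.biUnion (Set.finite_Iic n) fun l _ => ?_
    refine Set.Finite.biUnion (Set.finite_Iio (2 ^ l)) fun k _ => ?_
    exact (c.E l k).2.2.edges.finite_toSet
  have hE₀mem : ∀ l ≤ n, ∀ k, k + 1 ≤ 2 ^ l → ∀ e ∈ (c.E l k).2.2.edges, e ∈ E₀ := by
    intro l hl k hk e he
    simp only [hE₀def, Set.mem_iUnion, Set.mem_Iic, Set.mem_Iio, Set.mem_setOf_eq]
    exact ⟨l, hl, k, by omega, he⟩
  -- choose the new image positions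
  have hnew : ∀ m ∈ Dlev (n + 1) \ Dlev n, ∃ r : ℚ,
      (∀ j, j < 2 ^ n → m = dy (n + 1) (2 * j + 1) →
        c.g (dy n j) < r ∧ r < c.g (dy n (j + 1))) ∧ X.wv r ∉ T := by
    intro m hm
    obtain ⟨j, hj, hmj⟩ := new_dyadic hm.1 hm.2
    have hlt : c.g (dy n j) < c.g (dy n (j + 1)) :=
      hc.mono _ ⟨j, by omega, rfl⟩ _ ⟨j + 1, by omega, rfl⟩ (dy_lt_dy.mpr (by omega))
    have hIoo : (Set.Ioo (c.g (dy n j)) (c.g (dy n (j + 1)))).Infinite :=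
      Set.infinite_coe_iff.mp (Set.Ioo.infinite hlt)
    have hbad : {r : ℚ | X.wv r ∈ T}.Finite := by
      have : {r : ℚ | X.wv r ∈ T} = X.wv ⁻¹' T := rfl
      rw [this]
      exact Set.Finite.preimage (fun a _ b _ h => X.wv_inj h) hT
    obtain ⟨r, hr⟩ := (hIoo.diff hbad).nonempty
    refine ⟨r, ?_, hr.2⟩
    intro j' hj' hmj'
    have : 2 * j' + 1 = 2 * j + 1 := dy_inj (hmj ▸ hmj').symm
    have hjj : j' = j := by omega
    subst hjj
    exact ⟨hr.1.1, hr.1.2⟩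
  choose qf hqf using hnew
  set g' : ℚ → ℚ := fun x =>
    if h : x ∈ Dlev (n + 1) \ Dlev n then qf x h else c.g x with hg'def
  have gOld : ∀ m ∈ Dlev n, g' m = c.g m := by
    intro m hm
    simp only [hg'def]
    rw [dif_neg]
    exact fun h => h.2 hm
  have gNew : ∀ m (h : m ∈ Dlev (n + 1) \ Dlev n), g' m = qf m h := by
    intro m h
    simp only [hg'def, dif_pos h]
  have hodd_mem : ∀ j, j < 2 ^ n →
      dy (n + 1) (2 * j + 1) ∈ Dlev (n + 1) \ Dlev n := by
    intro j hj
    constructor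
    · exact ⟨2 * j + 1, by rw [pow_succ]; omega, rfl⟩
    · rintro ⟨j', hj', hmj'⟩
      rw [dy_succ n j'] at hmj'
      have := dy_inj hmj'
      omega
  -- monotonicity of g' on Dlev (n+1)
  have hcons : ∀ i, i + 1 ≤ 2 ^ (n + 1) → g' (dy (n + 1) i) < g' (dy (n + 1) (i + 1)) := by
    intro i hi
    rcases Nat.even_or_odd i with ⟨j, hj⟩ | ⟨j, hj⟩
    · have hij : i = 2 * j := by omega
      subst hij
      have hjlt : j < 2 ^ n := by rw [pow_succ] at hi; omega
      have hmem := hodd_mem j hjlt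
      have h1 : g' (dy (n + 1) (2 * j)) = c.g (dy n j) := by
        rw [← dy_succ]
        exact gOld _ ⟨j, by omega, rfl⟩
      rw [h1, gNew _ hmem]
      exact ((hqf _ hmem).1 j hjlt rfl).1
    · have hij : i = 2 * j + 1 := by omega
      subst hij
      have hjlt : j < 2 ^ n := by rw [pow_succ] at hi; omega
      have hmem := hodd_mem j hjlt
      have h1 : g' (dy (n + 1) (2 * j + 1 + 1)) = c.g (dy n (j + 1)) := by
        have : 2 * j + 1 + 1 = 2 * (j + 1) := by omega
        rw [this, ← dy_succ]
        exact gOld _ ⟨j + 1, by omega, rfl⟩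
      rw [h1, gNew _ hmem]
      exact ((hqf _ hmem).1 j hjlt rfl).2
  have hchain : ∀ i' i, i < i' → i' ≤ 2 ^ (n + 1) →
      g' (dy (n + 1) i) < g' (dy (n + 1) i') := by
    intro i'
    induction i' with
    | zero => omega
    | succ i'' ih =>
      intro i hi hle
      rcases Nat.lt_succ_iff_lt_or_eq.mp hi with h | h
      · exact (ih i h (by omega)).trans (hcons i'' (by omega))
      · subst h
        exact hcons i (by omega)
  have mono' : ∀ a ∈ Dlev (n + 1), ∀ b ∈ Dlev (n + 1), a < b → g' a < g' b := by
    rintro a ⟨i, hi, rfl⟩ b ⟨i', hi', rfl⟩ hab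
    exact hchain i' i (dy_lt_dy.mp hab) hi'
  -- choose the new paths
  set N := 2 ^ (n + 1) with hN
  set av : ℕ → V := fun k => X.wv (g' (dy (n + 1) k)) with havdef
  set bv : ℕ → V := fun k => X.wv (g' (dy (n + 1) (k + 1))) with hbvdef
  set W : ℕ → Set V := fun k =>
    X.wv '' (g' '' (Dlev (n + 1) \ {dy (n + 1) k, dy (n + 1) (k + 1)})) with hWdef
  have hab : ∀ k < N, av k ≠ bv k := by
    intro k hk
    exact X.wv_ne (ne_of_lt (mono' _ ⟨k, by omega, rfl⟩ _ ⟨k + 1, by omega, rfl⟩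
      (dy_lt_dy.mpr (by omega))))
  have hWfin : ∀ k < N, (W k).Finite :=
    fun k _ => (((Dlev_finite (n + 1)).diff).image _).image _
  have hside : ∀ k < N, ∀ z ∈ W k, ∃ q, X.SideSep q z (av k) (bv k) := by
    intro k hk z hz
    obtain ⟨r, ⟨m, hm, rfl⟩, rfl⟩ := hz
    have hmD : m ∈ Dlev (n + 1) := hm.1
    have hne1 : m ≠ dy (n + 1) k := fun h => hm.2 (by simp [h])
    have hne2 : m ≠ dy (n + 1) (k + 1) := fun h => hm.2 (by simp [h])
    have hkD : dy (n + 1) k ∈ Dlev (n + 1) := ⟨k, by omega, rfl⟩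
    have hk1D : dy (n + 1) (k + 1) ∈ Dlev (n + 1) := ⟨k + 1, by omega, rfl⟩
    have habk : g' (dy (n + 1) k) < g' (dy (n + 1) (k + 1)) :=
      mono' _ hkD _ hk1D (dy_lt_dy.mpr (by omega))
    rcases dyadic_outside hmD hne1 hne2 with hlt | hlt
    · have h1 : g' m < g' (dy (n + 1) k) := mono' _ hmD _ hkD hlt
      obtain ⟨q, hq1, hq2⟩ := exists_between h1
      exact ⟨q, Or.inl ⟨X.wv_lt_left hq1, X.wv_lt_right hq2, X.wv_lt_right (hq2.trans habk)⟩⟩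
    · have h1 : g' (dy (n + 1) (k + 1)) < g' m := mono' _ hk1D _ hmD hlt
      obtain ⟨q, hq1, hq2⟩ := exists_between h1
      exact ⟨q, Or.inr ⟨X.wv_lt_right hq2, X.wv_lt_left (habk.trans hq1),
        X.wv_lt_left hq1⟩⟩
  obtain ⟨F, hF1, hF2, hF3, hF4⟩ := X.seq_paths N av bv hab E₀ hE₀ W hWfin hside
  -- assemble the new configuration
  set E' : ℕ → ℕ → Σ' (u v : V), X.G.Walk u v := fun l k =>
    if h : l = n + 1 ∧ k + 1 ≤ 2 ^ (n + 1) then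
      ⟨av k, bv k, F k (by omega)⟩
    else c.E l k with hE'def
  have hE'old : ∀ l ≤ n, ∀ k, E' l k = c.E l k := by
    intro l hl k
    simp only [hE'def]
    rw [dif_neg]
    rintro ⟨h, -⟩
    omega
  have hE'new : ∀ k (hk : k + 1 ≤ 2 ^ (n + 1)),
      E' (n + 1) k = ⟨av k, bv k, F k (by omega)⟩ := by
    intro k hk
    simp only [hE'def, dif_pos (And.intro rfl hk)]
  refine ⟨⟨g', E'⟩, ⟨mono', ?_, ?_, ?_, ?_, ?_⟩, ?_, ?_⟩
  · -- ends1
    intro l hl k hk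
    dsimp only
    rcases Nat.lt_succ_iff_lt_or_eq.mp (Nat.lt_succ_of_le hl) with hln | hln
    · have hl' : l ≤ n := by omega
      rw [hE'old l hl' k, gOld _ (Dlev_mono hl' ⟨k, by omega, rfl⟩)]
      exact hc.ends1 l hl' k hk
    · subst hln
      rw [hE'new k hk]
  · -- ends2
    intro l hl k hk
    dsimp only
    rcases Nat.lt_succ_iff_lt_or_eq.mp (Nat.lt_succ_of_le hl) with hln | hln
    · have hl' : l ≤ n := by omega
      rw [hE'old l hl' k, gOld _ (Dlev_mono hl' ⟨k + 1, by omega, rfl⟩)]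
      exact hc.ends2 l hl' k hk
    · subst hln
      rw [hE'new k hk]
  · -- path
    intro l hl k hk
    dsimp only
    rcases Nat.lt_succ_iff_lt_or_eq.mp (Nat.lt_succ_of_le hl) with hln | hln
    · have hl' : l ≤ n := by omega
      rw [hE'old l hl' k]
      exact hc.path l hl' k hk
    · subst hln
      rw [hE'new k hk]
      exact hF1 k (by omega)
  · -- disj
    intro l hl k hk l' hl' k' hk' hne
    dsimp only
    rcases Nat.lt_succ_iff_lt_or_eq.mp (Nat.lt_succ_of_le hl) with hln | hln <;>
      rcases Nat.lt_succ_iff_lt_or_eq.mp (Nat.lt_succ_of_le hl') with hln' | hln'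
    · have h1 : l ≤ n := by omega
      have h2 : l' ≤ n := by omega
      rw [hE'old l h1 k, hE'old l' h2 k']
      exact hc.disj l h1 k hk l' h2 k' hk' hne
    · subst hln'
      have h1 : l ≤ n := by omega
      rw [hE'old l h1 k, hE'new k' hk']
      intro e he he'
      exact hF2 k' (by omega) e he' (hE₀mem l h1 k hk e he)
    · subst hln
      have h2 : l' ≤ n := by omega
      rw [hE'new k hk, hE'old l' h2 k']
      intro e he he'
      exact hF2 k (by omega) e he (hE₀mem l' h2 k' hk' e he')
    · subst hln; subst hln'
      rw [hE'new k hk, hE'new k' hk']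
      have hkk : k ≠ k' := by
        rcases hne with h | h
        · exact absurd rfl h
        · exact h
      exact hF4 k (by omega) k' (by omega) hkk
  · -- avoid
    intro l hl k hk m hm hne1 hne2
    dsimp only
    rcases Nat.lt_succ_iff_lt_or_eq.mp (Nat.lt_succ_of_le hl) with hln | hln
    · have hl' : l ≤ n := by omega
      rw [hE'old l hl' k]
      by_cases hmn : m ∈ Dlev n
      · rw [gOld _ hmn]
        exact hc.avoid l hl' k hk m hmn hne1 hne2
      · have hmd : m ∈ Dlev (n + 1) \ Dlev n := ⟨hm, hmn⟩
        rw [gNew _ hmd]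
        intro hsup
        exact (hqf _ hmd).2 (hTmem l hl' k hk _ hsup)
    · subst hln
      rw [hE'new k hk]
      intro hsup
      refine hF3 k (by omega) (X.wv (g' m)) ?_ hsup
      exact ⟨g' m, ⟨m, ⟨hm, by simp [hne1, hne2]⟩, rfl⟩, rfl⟩
  · -- Ext.g
    exact fun m hm => gOld m hm
  · -- Ext.E
    exact fun l hl k => hE'old l hl k

def StI [DecidableEq V] : (n : ℕ) → {c : Cfg X // CInv X n c} := fun n =>
  Nat.rec ⟨X.base.choose, X.base.choose_spec⟩
    (fun n p => ⟨(X.step n p.1 p.2).choose, (X.step n p.1 p.2).choose_spec.1⟩) n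

lemma StI_ext [DecidableEq V] (n : ℕ) :
    CExt X n ((X.StI n).1) ((X.StI (n + 1)).1) :=
  (X.step n (X.StI n).1 (X.StI n).2).choose_spec.2

lemma g_stab [DecidableEq V] {n N : ℕ} (h : n ≤ N) :
    ∀ m ∈ Dlev n, ((X.StI N).1).g m = ((X.StI n).1).g m := by
  induction N with
  | zero =>
    have : n = 0 := by omega
    subst this; exact fun m _ => rfl
  | succ N ih =>
    intro m hm
    rcases Nat.lt_succ_iff_lt_or_eq.mp (Nat.lt_succ_of_le h) with h' | h'
    · have h1 : n ≤ N := by omega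
      rw [(X.StI_ext N).1 m (Dlev_mono h1 hm)]
      exact ih h1 m hm
    · subst h'; rfl

lemma E_stab [DecidableEq V] {n N : ℕ} (h : n ≤ N) :
    ∀ l ≤ n, ∀ k, ((X.StI N).1).E l k = ((X.StI n).1).E l k := by
  induction N with
  | zero =>
    have : n = 0 := by omega
    subst this; exact fun l _ k => rfl
  | succ N ih =>
    intro l hl k
    rcases Nat.lt_succ_iff_lt_or_eq.mp (Nat.lt_succ_of_le h) with h' | h'
    · have h1 : n ≤ N := by omega
      rw [(X.StI_ext N).2 l (by omega) k]
      exact ih h1 l hl k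
    · subst h'; rfl

end FSetup
end Construction

noncomputable section Final
open Classical
variable {V : Type*}

lemma dy_cast (n k : ℕ) : dy n (k + 1) = ((k : ℚ) + 1) / 2 ^ n := by
  unfold dy; push_cast; ring

def lvD (m : DyadicSet) : ℕ := (mem_DyadicSet_iff.mp m.2).choose

lemma lvD_spec (m : DyadicSet) : m.1 ∈ Dlev (lvD m) :=
  (mem_DyadicSet_iff.mp m.2).choose_spec

namespace FSetup
variable (X : FSetup V) [DecidableEq V]

def αv (m : DyadicSet) : V := X.wv (((X.StI (lvD m)).1).g m.1)

lemma αv_at {m : DyadicSet} {N : ℕ} (h : m.1 ∈ Dlev N) :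
    X.αv m = X.wv (((X.StI N).1).g m.1) := by
  unfold αv
  congr 1
  have h1 := X.g_stab (le_max_left (lvD m) N) m.1 (lvD_spec m)
  have h2 := X.g_stab (le_max_right (lvD m) N) m.1 h
  rw [← h1, h2]

lemma αv_inj : Function.Injective X.αv := by
  intro m m' h
  by_contra hne
  have hval : m.1 ≠ m'.1 := fun hv => hne (Subtype.ext hv)
  set N := max (lvD m) (lvD m') with hN
  have hm : m.1 ∈ Dlev N := Dlev_mono (le_max_left _ _) (lvD_spec m)
  have hm' : m'.1 ∈ Dlev N := Dlev_mono (le_max_right _ _) (lvD_spec m')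
  rw [X.αv_at hm, X.αv_at hm'] at h
  have heq := X.wv_inj h
  rcases lt_or_gt_of_ne hval with hlt | hlt
  · exact absurd heq (ne_of_lt ((X.StI N).2.mono _ hm _ hm' hlt))
  · exact absurd heq.symm (ne_of_lt ((X.StI N).2.mono _ hm' _ hm hlt))

lemma stored_end1 {n k : ℕ} (hk : k + 1 ≤ 2 ^ n) {u : DyadicSet} (hu : u.1 = dy n k) :
    (((X.StI n).1).E n k).1 = X.αv u := by
  rw [(X.StI n).2.ends1 n le_rfl k hk,
    X.αv_at (show u.1 ∈ Dlev n from ⟨k, by omega, hu⟩), hu]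

lemma stored_end2 {n k : ℕ} (hk : k + 1 ≤ 2 ^ n) {v : DyadicSet}
    (hv : v.1 = dy n (k + 1)) :
    (((X.StI n).1).E n k).2.1 = X.αv v := by
  rw [(X.StI n).2.ends2 n le_rfl k hk,
    X.αv_at (show v.1 ∈ Dlev n from ⟨k + 1, by omega, hv⟩), hv]

lemma Pmap_exists ⦃u v : DyadicSet⦄ (h : halvedFarey.Adj u v) :
    ∃ p : X.G.Walk (X.αv u) (X.αv v), ∃ n k : ℕ, k + 1 ≤ 2 ^ n ∧
      ((u.1 = dy n k ∧ v.1 = dy n (k + 1)) ∨ (v.1 = dy n k ∧ u.1 = dy n (k + 1))) ∧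
      p.IsPath ∧
      (∀ e, e ∈ p.edges ↔ e ∈ (((X.StI n).1).E n k).2.2.edges) ∧
      (∀ x, x ∈ p.support ↔ x ∈ (((X.StI n).1).E n k).2.2.support) := by
  obtain ⟨hne, n, k, hk, hor⟩ := h
  have hpath := (X.StI n).2.path n le_rfl k hk
  rcases hor with ⟨hu, hv⟩ | ⟨hv, hu⟩
  · have hu' : u.1 = dy n k := hu
    have hv' : v.1 = dy n (k + 1) := by rw [hv, dy_cast]
    refine ⟨((((X.StI n).1).E n k).2.2).copy (X.stored_end1 hk hu') (X.stored_end2 hk hv'),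
      n, k, hk, Or.inl ⟨hu', hv'⟩, ?_, ?_, ?_⟩
    · rwa [SimpleGraph.Walk.isPath_copy]
    · intro e; rw [SimpleGraph.Walk.edges_copy]
    · intro x; rw [SimpleGraph.Walk.support_copy]
  · have hv' : v.1 = dy n k := hv
    have hu' : u.1 = dy n (k + 1) := by rw [hu, dy_cast]
    refine ⟨((((X.StI n).1).E n k).2.2).reverse.copy
      (X.stored_end2 hk hu') (X.stored_end1 hk hv'),
      n, k, hk, Or.inr ⟨hv', hu'⟩, ?_, ?_, ?_⟩
    · rw [SimpleGraph.Walk.isPath_copy]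
      exact hpath.reverse
    · intro e
      rw [SimpleGraph.Walk.edges_copy, SimpleGraph.Walk.edges_reverse, List.mem_reverse]
    · intro x
      rw [SimpleGraph.Walk.support_copy, SimpleGraph.Walk.support_reverse, List.mem_reverse]

def Pmap ⦃u v : DyadicSet⦄ (h : halvedFarey.Adj u v) : X.G.Walk (X.αv u) (X.αv v) :=
  (X.Pmap_exists h).choose

lemma Pmap_spec ⦃u v : DyadicSet⦄ (h : halvedFarey.Adj u v) :
    ∃ n k : ℕ, k + 1 ≤ 2 ^ n ∧
      ((u.1 = dy n k ∧ v.1 = dy n (k + 1)) ∨ (v.1 = dy n k ∧ u.1 = dy n (k + 1))) ∧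
      (X.Pmap h).IsPath ∧
      (∀ e, e ∈ (X.Pmap h).edges ↔ e ∈ (((X.StI n).1).E n k).2.2.edges) ∧
      (∀ x, x ∈ (X.Pmap h).support ↔ x ∈ (((X.StI n).1).E n k).2.2.support) :=
  (X.Pmap_exists h).choose_spec

end FSetup
end Final

/-- if an infinitely edge-connected graph has a set of oriented
unitary compound-separations with pairwise distinct separators which is ordered
like `ℚ`, then the halved Farey graph is strongly immersed in it. -/
theorem halvedFarey_of_Q_ordered_seps {V : Type*} (G : SimpleGraph V)
    (hG : InfEdgeConn G) (S : Set (Set V × Set V))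
    (hS : ∀ s ∈ S, ∃ w, IsUnitaryCSep G s.1 s.2 w)
    (hdist : ∀ s ∈ S, ∀ t ∈ S, s ≠ t → s.1 ∩ s.2 ≠ t.1 ∩ t.2)
    (f : ↥S ≃ ℚ)
    (hf : ∀ s t : ↥S, osLE s.val t.val ↔ f s ≤ f t) :
    StronglyImmersed halvedFarey G := by
  classical
  set X : FSetup V := ⟨G, hG, S, hS, hdist, f, hf⟩ with hX
  refine ⟨X.αv, X.Pmap, X.αv_inj, ?_, ?_, ?_⟩
  · intro u v h
    obtain ⟨n, k, hk, hor, hp, hE, hSup⟩ := X.Pmap_spec h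
    exact hp
  · -- edge-disjointness
    intro u v u' v' h h' hne e he he'
    obtain ⟨n, k, hk, hor, hp, hE, hSup⟩ := X.Pmap_spec h
    obtain ⟨n', k', hk', hor', hp', hE', hSup'⟩ := X.Pmap_spec h'
    have hnk : n ≠ n' ∨ k ≠ k' := by
      by_contra hcon
      push_neg at hcon
      obtain ⟨rfl, rfl⟩ := hcon
      apply hne
      rcases hor with ⟨hu, hv⟩ | ⟨hv, hu⟩ <;> rcases hor' with ⟨hu', hv'⟩ | ⟨hv', hu'⟩
      · rw [Subtype.ext (hu.trans hu'.symm), Subtype.ext (hv.trans hv'.symm)]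
      · rw [Subtype.ext (hu.trans hv'.symm), Subtype.ext (hv.trans hu'.symm), Sym2.eq_swap]
      · rw [Subtype.ext (hv.trans hu'.symm), Subtype.ext (hu.trans hv'.symm), Sym2.eq_swap]
      · rw [Subtype.ext (hu.trans hu'.symm), Subtype.ext (hv.trans hv'.symm)]
    have hdisj := (X.StI (max n n')).2.disj n (le_max_left _ _) k hk n'
      (le_max_right _ _) k' hk' hnk
    rw [X.E_stab (le_max_left n n') n le_rfl k,
      X.E_stab (le_max_right n n') n' le_rfl k'] at hdisj
    exact hdisj e ((hE e).mp he) ((hE' e).mp he')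
  · -- internal vertices avoid the image
    intro u v h w hw hz
    obtain ⟨m, hm⟩ := hz
    obtain ⟨n, k, hk, hor, hp, hE, hSup⟩ := X.Pmap_spec h
    by_cases h1 : m.1 = dy n k
    · rcases hor with ⟨hu, hv⟩ | ⟨hv, hu⟩
      · left; rw [← hm]; congr 1; exact Subtype.ext (h1.trans hu.symm)
      · right; rw [← hm]; congr 1; exact Subtype.ext (h1.trans hv.symm)
    · by_cases h2 : m.1 = dy n (k + 1)
      · rcases hor with ⟨hu, hv⟩ | ⟨hv, hu⟩
        · right; rw [← hm]; congr 1; exact Subtype.ext (h2.trans hv.symm)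
        · left; rw [← hm]; congr 1; exact Subtype.ext (h2.trans hu.symm)
      · exfalso
        set N := max n (lvD m) with hN
        have hmN : m.1 ∈ Dlev N := Dlev_mono (le_max_right _ _) (lvD_spec m)
        have havoid := (X.StI N).2.avoid n (le_max_left _ _) k hk m.1 hmN h1 h2
        rw [X.E_stab (le_max_left n (lvD m)) n le_rfl k] at havoid
        apply havoid
        have : X.wv (((X.StI N).1).g m.1) = w := by rw [← X.αv_at hmN]; exact hm
        rw [this]
        exact (hSup w).mp hw
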